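/- Every normal Hausdorff linearly H-closed space is countably compact. -/

import Mathlib

/-- A space is *linearly H-closed* if every cover by open sets that is linearly
ordered by inclusion (a chain cover) has a member that is dense in the space. -/
def LinearlyHClosed (X : Type*) [TopologicalSpace X] : Prop :=
  ∀ C : Set (Set X), (∀ U ∈ C, IsOpen U) → ⋃₀ C = Set.univ → IsChain (· ⊆ ·) C →
    ∃ U ∈ C, Dense U

/-- A space is *countably compact* if every countable open cover has a finite
subcover. -/
def CountablyCompact (X : Type*) [TopologicalSpace X] : Prop :=
  ∀ C : Set (Set X), C.Countable → (∀ U ∈ C, IsOpen U) → ⋃₀ C = Set.univ →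
    ∃ F : Finset (Set X), ↑F ⊆ C ∧ ⋃₀ (F : Set (Set X)) = Set.univ

theorem normal_linearlyHClosed_countablyCompact {X : Type*} [TopologicalSpace X]
    [T2Space X] [NormalSpace X] (hX : LinearlyHClosed X) : CountablyCompact X := by
  classical
  intro C hCc hCo hCu
  by_contra hcon
  push_neg at hcon
  have hCne : C.Nonempty := by
    rcases C.eq_empty_or_nonempty with h | h
    · exfalso
      rw [h, Set.sUnion_empty] at hCu
      exact (hcon ∅ (by simp)) (by simp [← hCu])
    · exact h
  obtain ⟨f, hf⟩ := Set.Countable.exists_eq_range hCc hCne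
  set V : ℕ → Set X := fun n => ⋃ m ∈ Finset.range (n + 1), f m with hV
  have hfC : ∀ m, f m ∈ C := fun m => hf ▸ Set.mem_range_self m
  have hVopen : ∀ n, IsOpen (V n) := fun n => isOpen_biUnion fun m _ => hCo _ (hfC m)
  have hVmono : Monotone V := by
    intro a b hab
    apply Set.biUnion_subset_biUnion_left
    intro m hm
    have hm' := Finset.mem_coe.mp hm
    rw [Finset.mem_range] at hm'
    exact Finset.mem_coe.mpr (Finset.mem_range.mpr (by omega))
  have hVcover : ∀ y : X, ∃ n, y ∈ V n := by
    intro y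
    have hy : y ∈ ⋃₀ C := hCu ▸ Set.mem_univ y
    obtain ⟨U, hU, hyU⟩ := hy
    rw [hf] at hU
    obtain ⟨m, rfl⟩ := hU
    exact ⟨m, Set.mem_biUnion (Finset.self_mem_range_succ m) hyU⟩
  have hVne : ∀ n, ∃ y, y ∉ V n := by
    intro n
    by_contra hy
    push_neg at hy
    refine hcon ((Finset.range (n + 1)).image f) ?_ ?_
    · intro U hU
      simp only [Finset.coe_image, Set.mem_image] at hU
      obtain ⟨m, _, rfl⟩ := hU
      exact hfC m
    · apply Set.eq_univ_of_forall
      intro y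
      have := hy y
      rw [Finset.coe_image, Set.sUnion_image]
      simpa [hV] using this
  choose x hx using hVne
  have hkey : ∀ m n, x m ∈ V n → m < n := by
    intro m n hmn
    by_contra hle
    push_neg at hle
    exact hx m (hVmono hle hmn)
  set r : X → ℕ := fun y => Nat.find (hVcover y) with hrdef
  have hrV : ∀ y, y ∈ V (r y) := fun y => Nat.find_spec (hVcover y)
  have hrx : ∀ n, n < r (x n) := by
    intro n
    by_contra hle
    push_neg at hle
    exact hx n (hVmono hle (hrV (x n)))
  set D : Set X := Set.range x with hD
  have hfin : ∀ n, (V n ∩ D) ⊆ x '' Set.Iio n := by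
    rintro n y ⟨hyV, m, rfl⟩
    exact ⟨m, hkey m n hyV, rfl⟩
  have hfinc : ∀ n, IsClosed (x '' Set.Iio n) := fun n =>
    ((Set.finite_Iio n).image x).isClosed
  have hDclosed : IsClosed D := by
    rw [← isOpen_compl_iff, isOpen_iff_forall_mem_open]
    intro y hy
    refine ⟨V (r y) \ x '' Set.Iio (r y), ?_, (hVopen _).sdiff (hfinc _),
      ⟨hrV y, fun hmem => hy (Set.image_subset_range x _ hmem)⟩⟩
    rintro z ⟨hz1, hz2⟩ hzD
    exact hz2 (hfin _ ⟨hz1, hzD⟩)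
  have hDdisc : DiscreteTopology D := by
    rw [discreteTopology_iff_isOpen_singleton]
    intro a
    obtain ⟨d, hd⟩ := a
    rw [isOpen_induced_iff]
    refine ⟨V (r d) \ (x '' Set.Iio (r d) \ {d}), (hVopen _).sdiff
      (((((Set.finite_Iio (r d)).image x)).subset Set.diff_subset).isClosed), ?_⟩
    ext ⟨e, he⟩
    simp only [Set.mem_preimage, Set.mem_diff, Set.mem_singleton_iff, Subtype.mk.injEq]
    constructor
    · rintro ⟨he1, he2⟩
      by_contra hne
      exact he2 ⟨hfin _ ⟨he1, he⟩, hne⟩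
    · rintro rfl
      exact ⟨hrV _, fun h => h.2 rfl⟩
  let fD : C(D, ℝ) := ⟨fun d => (r d.1 : ℝ), continuous_of_discreteTopology⟩
  obtain ⟨g, hg⟩ := ContinuousMap.exists_restrict_eq hDclosed fD
  have hgval : ∀ n, g (x n) = (r (x n) : ℝ) := by
    intro n
    have h1 := congrFun (congrArg DFunLike.coe hg) ⟨x n, ⟨n, rfl⟩⟩
    simpa [ContinuousMap.restrict, fD] using h1
  have hWopen : ∀ n : ℕ, IsOpen {y : X | |g y| < (n : ℝ)} := fun n =>
    isOpen_lt (continuous_abs.comp g.continuous) continuous_const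
  obtain ⟨U, hU, hUdense⟩ := hX (Set.range fun n : ℕ => {y : X | |g y| < (n : ℝ)})
    (by rintro _ ⟨n, rfl⟩; exact hWopen n)
    (Set.eq_univ_of_forall fun y => by
      obtain ⟨n, hn⟩ := exists_nat_gt |g y|
      exact ⟨_, ⟨n, rfl⟩, hn⟩)
    (by
      rintro _ ⟨a, rfl⟩ _ ⟨b, rfl⟩ _
      rcases le_total a b with h | h
      · exact Or.inl fun y hy => (show |g y| < (b:ℝ) from lt_of_lt_of_le hy (by exact_mod_cast h))
      · exact Or.inr fun y hy => (show |g y| < (a:ℝ) from lt_of_lt_of_le hy (by exact_mod_cast h)))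
  obtain ⟨n, rfl⟩ := hU
  have hclosed : IsClosed {y : X | |g y| ≤ (n : ℝ)} :=
    isClosed_le (continuous_abs.comp g.continuous) continuous_const
  have hall : ∀ y, |g y| ≤ (n : ℝ) := by
    intro y
    have hsub : closure {y : X | |g y| < (n : ℝ)} ⊆ {y : X | |g y| ≤ (n : ℝ)} :=
      closure_minimal (fun z hz => (le_of_lt hz : |g z| ≤ (n:ℝ))) hclosed
    exact hsub (hUdense.closure_eq ▸ Set.mem_univ y)
  have h1 := hall (x n)
  rw [hgval n, Nat.abs_cast, Nat.cast_le] at h1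
  exact absurd h1 (not_le.mpr (hrx n))
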